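/- Fix N ∈ ℕ. For integers 1 ≤ q ≤ N and a ∈ 𝒫_q = {a ∈ ℤ : 1 ≤ a ≤ q, gcd(a,q) = 1}, let J_{a/q} = (a/q − 1/(Nq), a/q + 1/(Nq)) ⊂ ℝ. Call J_{a/q} a major arc if q < N/10 and a minor arc otherwise. Then for every t ∈ (0,1], the number of pairs (q, a) with 1 ≤ q ≤ N and a ∈ 𝒫_q such that t ∈ J_{a/q} is at most 100; that is, ‖∑_{major arcs J} 1_J‖_∞ + ‖∑_{minor arcs J} 1_J‖_∞ ≤ 100. -/

import Mathlib

open scoped Classical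

private lemma frac_gap6 {q a q' a' : ℕ} (hq : 1 ≤ q) (hq' : 1 ≤ q')
    (hc : Nat.gcd a q = 1) (hc' : Nat.gcd a' q' = 1)
    (hne : (q, a) ≠ (q', a')) :
    1 / ((q : ℝ) * q') ≤ |(a : ℝ) / q - (a' : ℝ) / q'| := by
  have hq0 : (0:ℝ) < q := by exact_mod_cast hq
  have hq'0 : (0:ℝ) < q' := by exact_mod_cast hq'
  have hcross : (a:ℤ) * q' - (a':ℤ) * q ≠ 0 := by
    intro h
    have hcn : a * q' = a' * q := by
      have : (a:ℤ) * q' = (a':ℤ) * q := by linarith [sub_eq_zero.mp h]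
      exact_mod_cast this
    have h1 : q ∣ q' := by
      have hd : q ∣ q' * a := by
        rw [mul_comm]
        exact hcn ▸ dvd_mul_left q a'
      exact (Nat.Coprime.dvd_of_dvd_mul_right (Nat.coprime_comm.mp hc) hd)
    have h2 : q' ∣ q := by
      have hd : q' ∣ q * a' := by
        rw [mul_comm]
        exact hcn.symm ▸ dvd_mul_left q' a
      exact (Nat.Coprime.dvd_of_dvd_mul_right (Nat.coprime_comm.mp hc') hd)
    have hqq : q = q' := Nat.dvd_antisymm h1 h2
    subst hqq
    have ha : a = a' := Nat.eq_of_mul_eq_mul_right (by omega) hcn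
    exact hne (by rw [ha])
  have key : (a:ℝ)/q - (a':ℝ)/q' = (((a:ℤ)*q' - (a':ℤ)*q : ℤ) : ℝ) / ((q:ℝ)*q') := by
    field_simp
    push_cast
    ring
  rw [key, abs_div, abs_of_pos (show (0:ℝ) < (q:ℝ)*q' by positivity)]
  have h1 : (1:ℝ) ≤ |(((a:ℤ)*q' - (a':ℤ)*q : ℤ) : ℝ)| := by
    rw [← Int.cast_abs]
    exact_mod_cast Int.one_le_abs hcross
  gcongr

theorem stmt6 (N : ℕ) (hN : 1 ≤ N) (t : ℝ) (ht0 : 0 < t) (ht1 : t ≤ 1) :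
    ((Finset.Icc 1 N ×ˢ Finset.Icc 1 N).filter
        (fun qa : ℕ × ℕ => qa.2 ≤ qa.1 ∧ Nat.gcd qa.2 qa.1 = 1 ∧
          |t - (qa.2 : ℝ) / (qa.1 : ℝ)| < 1 / ((N : ℝ) * (qa.1 : ℝ)))).card ≤ 100 := by
  set S := ((Finset.Icc 1 N ×ˢ Finset.Icc 1 N).filter
        (fun qa : ℕ × ℕ => qa.2 ≤ qa.1 ∧ Nat.gcd qa.2 qa.1 = 1 ∧
          |t - (qa.2 : ℝ) / (qa.1 : ℝ)| < 1 / ((N : ℝ) * (qa.1 : ℝ)))) with hS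
  have hNR : (0:ℝ) < N := by exact_mod_cast hN
  have hmem : ∀ x ∈ S, 1 ≤ x.1 ∧ x.1 ≤ N ∧ 1 ≤ x.2 ∧ x.2 ≤ x.1 ∧
      Nat.gcd x.2 x.1 = 1 ∧ |t - (x.2:ℝ)/(x.1:ℝ)| < 1/((N:ℝ)*(x.1:ℝ)) := by
    intro x hx
    simp only [hS, Finset.mem_filter, Finset.mem_product, Finset.mem_Icc] at hx
    tauto
  -- two distinct members: spacing vs closeness
  have key2 : ∀ x ∈ S, ∀ y ∈ S, x ≠ y →
      1 / ((x.1:ℝ) * y.1) ≤ |(x.2:ℝ)/x.1 - (y.2:ℝ)/y.1| ∧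
      |(x.2:ℝ)/x.1 - (y.2:ℝ)/y.1| < 1/((N:ℝ)*x.1) + 1/((N:ℝ)*y.1) := by
    intro x hx y hy hxy
    obtain ⟨hx1, hx2, hx3, hx4, hx5, hx6⟩ := hmem x hx
    obtain ⟨hy1, hy2, hy3, hy4, hy5, hy6⟩ := hmem y hy
    constructor
    · exact frac_gap6 hx1 hy1 hx5 hy5 (by
        intro h
        exact hxy (Prod.ext (congrArg Prod.fst h) (congrArg Prod.snd h)))
    · calc |(x.2:ℝ)/x.1 - (y.2:ℝ)/y.1|
          ≤ |(x.2:ℝ)/x.1 - t| + |t - (y.2:ℝ)/y.1| := abs_sub_le _ _ _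
        _ = |t - (x.2:ℝ)/x.1| + |t - (y.2:ℝ)/y.1| := by rw [abs_sub_comm ((x.2:ℝ)/x.1) t]
        _ < 1/((N:ℝ)*x.1) + 1/((N:ℝ)*y.1) := add_lt_add hx6 hy6
  -- split by small / large denominator
  have hsplit := Finset.card_filter_add_card_filter_not
    (s := S) (p := fun x => 2 * x.1 ≤ N)
  have hcard1 : (S.filter (fun x => 2 * x.1 ≤ N)).card ≤ 1 := by
    rw [Finset.card_le_one]
    intro x hx y hy
    by_contra hxy
    have hx' := Finset.mem_of_mem_filter x hx
    have hy' := Finset.mem_of_mem_filter y hy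
    have hxq : 2 * x.1 ≤ N := (Finset.mem_filter.mp hx).2
    have hyq : 2 * y.1 ≤ N := (Finset.mem_filter.mp hy).2
    obtain ⟨hg, hl⟩ := key2 x hx' y hy' hxy
    obtain ⟨hx1, hx2, _⟩ := hmem x hx'
    obtain ⟨hy1, hy2, _⟩ := hmem y hy'
    have hxr : (0:ℝ) < x.1 := by exact_mod_cast hx1
    have hyr : (0:ℝ) < y.1 := by exact_mod_cast hy1
    have hxqr : 2 * (x.1:ℝ) ≤ N := by exact_mod_cast hxq
    have hyqr : 2 * (y.1:ℝ) ≤ N := by exact_mod_cast hyq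
    have e1 : 1/((N:ℝ)*x.1) ≤ 1/(2*(y.1:ℝ)*x.1) := by gcongr
    have e2 : 1/((N:ℝ)*y.1) ≤ 1/(2*(x.1:ℝ)*y.1) := by gcongr
    have e3 : 1/(2*(y.1:ℝ)*x.1) + 1/(2*(x.1:ℝ)*y.1) = 1/((x.1:ℝ)*y.1) := by
      field_simp
      ring
    linarith
  have hcard2 : (S.filter (fun x => ¬ 2 * x.1 ≤ N)).card ≤ 5 := by
    have := Finset.card_le_card_of_injOn (f := fun x : ℕ × ℕ => ⌊(x.2:ℝ)/x.1 * ((N:ℝ)*N)⌋)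
      (s := S.filter (fun x => ¬ 2 * x.1 ≤ N))
      (t := Finset.Icc (⌊t * ((N:ℝ)*N)⌋ - 2) (⌊t * ((N:ℝ)*N)⌋ + 2))
      ?mapsto ?inj
    · calc (S.filter (fun x => ¬ 2 * x.1 ≤ N)).card
          ≤ (Finset.Icc (⌊t * ((N:ℝ)*N)⌋ - 2) (⌊t * ((N:ℝ)*N)⌋ + 2)).card := this
        _ = 5 := by rw [Int.card_Icc]; omega
    case mapsto =>
      intro x hx
      have hx' := Finset.mem_of_mem_filter x hx
      have hxq : N < 2 * x.1 := by
        have := (Finset.mem_filter.mp hx).2; omega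
      obtain ⟨hx1, hx2, hx3, hx4, hx5, hx6⟩ := hmem x hx'
      have hxr : (0:ℝ) < x.1 := by exact_mod_cast hx1
      have hxqr : (N:ℝ) < 2 * x.1 := by exact_mod_cast hxq
      have hsmall : 1/((N:ℝ)*x.1) ≤ 2/((N:ℝ)*N) := by
        rw [div_le_div_iff₀ (by positivity) (by positivity)]
        nlinarith
      have hclose : |t - (x.2:ℝ)/x.1| < 2/((N:ℝ)*N) := lt_of_lt_of_le hx6 hsmall
      rw [abs_lt] at hclose
      have hNN : (0:ℝ) < (N:ℝ)*N := by positivity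
      have hub : (x.2:ℝ)/x.1 * ((N:ℝ)*N) < t * ((N:ℝ)*N) + 2 := by
        have h1 : (x.2:ℝ)/x.1 < t + 2/((N:ℝ)*N) := by linarith
        have := mul_lt_mul_of_pos_right h1 hNN
        calc (x.2:ℝ)/x.1 * ((N:ℝ)*N) < (t + 2/((N:ℝ)*N)) * ((N:ℝ)*N) := this
          _ = t * ((N:ℝ)*N) + 2 := by field_simp
      have hlb : t * ((N:ℝ)*N) - 2 < (x.2:ℝ)/x.1 * ((N:ℝ)*N) := by
        have h1 : t - 2/((N:ℝ)*N) < (x.2:ℝ)/x.1 := by linarith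
        have := mul_lt_mul_of_pos_right h1 hNN
        calc t * ((N:ℝ)*N) - 2 = (t - 2/((N:ℝ)*N)) * ((N:ℝ)*N) := by field_simp
          _ < (x.2:ℝ)/x.1 * ((N:ℝ)*N) := this
      simp only [Finset.mem_coe, Finset.mem_Icc]
      constructor
      · have h := Int.floor_le_floor (le_of_lt hlb)
        rwa [show t * ((N:ℝ)*N) - 2 = t * ((N:ℝ)*N) + ((-2 : ℤ):ℝ) by push_cast; ring,
          Int.floor_add_intCast] at h
      · have h := Int.floor_le_floor (le_of_lt hub)
        rwa [show t * ((N:ℝ)*N) + 2 = t * ((N:ℝ)*N) + ((2 : ℤ):ℝ) by push_cast; ring,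
          Int.floor_add_intCast] at h
    case inj =>
      intro x hx y hy hfxy
      by_contra hxy
      have hx' := Finset.mem_of_mem_filter x hx
      have hy' := Finset.mem_of_mem_filter y hy
      obtain ⟨hg, _⟩ := key2 x hx' y hy' hxy
      obtain ⟨hx1, hx2, _⟩ := hmem x hx'
      obtain ⟨hy1, hy2, _⟩ := hmem y hy'
      have hxr : (0:ℝ) < x.1 := by exact_mod_cast hx1
      have hyr : (0:ℝ) < y.1 := by exact_mod_cast hy1
      have hx2r : (x.1:ℝ) ≤ N := by exact_mod_cast hx2
      have hy2r : (y.1:ℝ) ≤ N := by exact_mod_cast hy2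
      -- from equal floors: |u - v| < 1
      have hff : |(x.2:ℝ)/x.1 * ((N:ℝ)*N) - (y.2:ℝ)/y.1 * ((N:ℝ)*N)| < 1 :=
        Int.abs_sub_lt_one_of_floor_eq_floor hfxy
      have hNN : (0:ℝ) < (N:ℝ)*N := by positivity
      have hge : 1/((N:ℝ)*N) ≤ |(x.2:ℝ)/x.1 - (y.2:ℝ)/y.1| := by
        refine le_trans ?_ hg
        gcongr <;> positivity
      have : 1 ≤ |(x.2:ℝ)/x.1 - (y.2:ℝ)/y.1| * ((N:ℝ)*N) := by
        rw [div_le_iff₀ hNN] at hge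
        linarith [hge]
      rw [show (x.2:ℝ)/x.1 * ((N:ℝ)*N) - (y.2:ℝ)/y.1 * ((N:ℝ)*N)
          = ((x.2:ℝ)/x.1 - (y.2:ℝ)/y.1) * ((N:ℝ)*N) by ring,
        abs_mul, abs_of_pos hNN] at hff
      linarith
  omega
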